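/- Let m ≥ 2 be an integer and f ∈ ℤ[x] of degree n with f(x) ≡ xⁿ − 1 (mod m), i.e., m divides every coefficient of f(x) − (xⁿ − 1). Let g be a factor of f over ℤ with no cyclotomic factors and g(1) ≠ 0. Then the Mahler measure satisfies μ(g) ≥ log(m/2)·(deg g)/n. -/

import Mathlib

open Polynomial

/-- The logarithmic Mahler measure of an integer polynomial:
`μ(g) = log|lead(g)| + Σ log⁺|α|` over the complex roots `α` of `g`. -/
noncomputable def mahlerMeasure (g : Polynomial ℤ) : ℝ :=
  Real.log |(g.leadingCoeff : ℝ)| +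
    (((g.map (Int.castRingHom ℂ)).roots).map
      (fun z => Real.log (max 1 (‖z‖)))).sum

/-- `g` has no cyclotomic factors. -/
def NoCyclotomicFactor (g : Polynomial ℤ) : Prop :=
  ∀ k : ℕ, 0 < k → ¬ (Polynomial.cyclotomic k ℤ ∣ g)

/-- The logarithmic supremum norm of a complex polynomial on the unit circle. -/
noncomputable def nuC (T : Polynomial ℂ) : ℝ :=
  Real.log (sSup ((fun z => ‖T.eval z‖) '' {z : ℂ | ‖z‖ = 1}))

lemma aeval_int_isIntegral {K : Type*} [CommRing K] {r : K} (hr : IsIntegral ℤ r)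
    (q : Polynomial ℤ) : IsIntegral ℤ (aeval r q) :=
  .of_mem_of_fg _ hr.fg_adjoin_singleton _ (aeval_mem_adjoin_singleton _ _)

/-- Key integrality lemma: the product of the values of an integer polynomial at the
complex roots of a monic integer polynomial is a (rational) integer. -/
lemma prod_roots_eval_int (P q : Polynomial ℤ) (hP : P.Monic) :
    ∃ z : ℤ, (((P.map (Int.castRingHom ℂ)).roots).map
      (fun x => (q.map (Int.castRingHom ℂ)).eval x)).prod = (z : ℂ) := by
  set Pq : Polynomial ℚ := P.map (Int.castRingHom ℚ) with hPq
  set K := Pq.SplittingField with hK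
  haveI : Algebra.IsIntegral ℚ K := Algebra.IsIntegral.of_finite ℚ K
  haveI : IsGalois ℚ K := by haveI : Normal ℚ K := SplittingField.instNormal Pq; exact ⟨⟩
  have hsplK : (Pq.map (algebraMap ℚ K)).Splits :=
    SplittingField.splits Pq
  set PK : Polynomial K := Pq.map (algebraMap ℚ K) with hPK
  have hPKint : PK = P.map (algebraMap ℤ K) := by
    simp only [hPK, hPq, map_map]; congr 1
  have hint : ∀ r ∈ PK.roots, IsIntegral ℤ r := by
    intro r hr
    refine ⟨P, hP, ?_⟩
    have := (mem_roots'.mp hr).2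
    rwa [hPKint, IsRoot.def, eval_map] at this
  set x : K := (PK.roots.map (fun r => aeval r q)).prod with hx
  have hxint : IsIntegral ℤ x :=
    IsIntegral.multiset_prod (by
      intro y hy
      obtain ⟨r, hr, rfl⟩ := Multiset.mem_map.mp hy
      exact aeval_int_isIntegral (hint r hr) q)
  have hfix : ∀ σ : K ≃ₐ[ℚ] K, σ x = x := by
    intro σ
    have hcoeffmap : PK.map (σ : K →+* K) = PK := by
      rw [hPK, map_map]
      congr 1
      exact RingHom.ext fun a => σ.commutes a
    have hperm : PK.roots.map (σ : K →+* K) = PK.roots := by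
      have h1 := hsplK.roots_map (σ : K →+* K)
      rw [hcoeffmap] at h1
      exact h1.symm
    have h2 : (⇑σ ∘ fun r => aeval r q) = (fun r => aeval r q) ∘ ⇑(σ : K →+* K) := by
      funext r
      exact (Polynomial.aeval_algHom_apply (σ.toAlgHom.restrictScalars ℤ) r q).symm
    rw [hx, map_multiset_prod, Multiset.map_map, h2, ← Multiset.map_map, hperm]
  have hbot : x ∈ (⊥ : IntermediateField ℚ K) := by
    rw [← IsGalois.fixedField_fixingSubgroup (⊥ : IntermediateField ℚ K)]
    exact fun g => hfix g
  obtain ⟨c, hc⟩ := IntermediateField.mem_bot.mp hbot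
  have hcint : IsIntegral ℤ c := by
    rw [← isIntegral_algebraMap_iff (algebraMap ℚ K).injective, hc]; exact hxint
  obtain ⟨z, hz⟩ := IsIntegrallyClosed.isIntegral_iff.mp hcint
  refine ⟨z, ?_⟩
  let j : K →ₐ[ℚ] ℂ := IsAlgClosed.lift
  have hmapeq : P.map (Int.castRingHom ℂ) = PK.map (j : K →+* ℂ) := by
    rw [hPKint, map_map]; congr 1; exact Subsingleton.elim _ _
  have hroots : (P.map (Int.castRingHom ℂ)).roots = PK.roots.map (j : K →+* ℂ) := by
    rw [hmapeq]; exact hsplK.roots_map _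
  have h3 : ∀ r : K, (q.map (Int.castRingHom ℂ)).eval (j r) = j (aeval r q) := by
    intro r
    rw [eval_map, show Int.castRingHom ℂ = algebraMap ℤ ℂ from Subsingleton.elim _ _, ← aeval_def]
    exact Polynomial.aeval_algHom_apply (j.restrictScalars ℤ) r q
  rw [hroots, Multiset.map_map]
  have h4 : (PK.roots.map ((fun x => (q.map (Int.castRingHom ℂ)).eval x) ∘ (j : K →+* ℂ))).prod
      = j x := by
    rw [hx, show ((fun x => (q.map (Int.castRingHom ℂ)).eval x) ∘ (j : K →+* ℂ))
        = fun r => j (aeval r q) by funext r; exact h3 r,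
      show (PK.roots.map fun r => j (aeval r q))
        = (PK.roots.map fun r => aeval r q).map ⇑j by rw [Multiset.map_map]; rfl]
    exact (map_multiset_prod (j : K →+* ℂ) _).symm
  rw [h4, ← hc, j.commutes, ← hz]
  simp

lemma mprod_swap {α β M : Type*} [CommMonoid M] (s : Multiset α) (t : Multiset β)
    (f : α → β → M) :
    (s.map fun a => (t.map (f a)).prod).prod = (t.map fun b => (s.map (f · b)).prod).prod := by
  induction s using Multiset.induction with
  | empty => simp
  | cons a s ih => simp [Multiset.prod_map_mul, ih]

lemma mprod_const {α M : Type*} [CommMonoid M] (s : Multiset α) (c : M) :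
    (s.map fun _ => c).prod = c ^ Multiset.card s := by
  rw [Multiset.map_const', Multiset.prod_replicate]

lemma msum_log {s : Multiset ℝ} (h : ∀ x ∈ s, 0 < x) :
    (s.map Real.log).sum = Real.log s.prod := by
  induction s using Multiset.induction with
  | empty => simp
  | cons a s ih =>
    have ha : 0 < a := h a (by simp)
    have hs : ∀ x ∈ s, 0 < x := fun x hx => h x (by simp [hx])
    have hp : 0 < s.prod := Multiset.prod_pos hs
    simp [Real.log_mul ha.ne' hp.ne', ih hs]

theorem mahler_ge_of_congruent_xn_sub_one (m : ℕ) (hm : 2 ≤ m)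
    (f : Polynomial ℤ) (n : ℕ) (hn : 0 < n) (hfdeg : f.natDegree = n)
    (hcong : ∀ i : ℕ, (m : ℤ) ∣ (f - (X ^ n - 1)).coeff i)
    (g : Polynomial ℤ) (hg : g ∣ f) (hcyc : NoCyclotomicFactor g) (hg1 : g.eval 1 ≠ 0) :
    mahlerMeasure g ≥ Real.log ((m : ℝ) / 2) * (g.natDegree : ℝ) / (n : ℝ) := by
  classical
  set ι : ℤ →+* ℂ := Int.castRingHom ℂ with hι
  have hg0 : g ≠ 0 := fun hgz => hg1 (by simp [hgz])
  set D := g.natDegree with hD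
  set a := g.leadingCoeff with ha
  have ha0 : a ≠ 0 := leadingCoeff_ne_zero.mpr hg0
  have ha0c : (a : ℂ) ≠ 0 := Int.cast_ne_zero.mpr ha0
  set gc : Polynomial ℂ := g.map ι with hgc
  have hgc0 : gc ≠ 0 := (Polynomial.map_ne_zero_iff Int.cast_injective).mpr hg0
  have hgcdeg : gc.natDegree = D := natDegree_map_eq_of_injective Int.cast_injective g
  set A := gc.roots with hA
  have hAcard : Multiset.card A = D := by
    rw [hA, ← hgcdeg]
    exact splits_iff_card_roots.mp (IsAlgClosed.splits gc)
  -- extract h with f = X^n - 1 + m * h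
  have hm0 : (m : ℤ) ≠ 0 := Int.natCast_ne_zero.mpr (by omega)
  obtain ⟨h, hfh⟩ : C (m : ℤ) ∣ f - (X ^ n - 1) := (C_dvd_iff_dvd_coeff _ _).mpr hcong
  have hf : f = X ^ n - 1 + C (m : ℤ) * h := by rw [← hfh]; ring
  have hXn1 : (X ^ n - 1 : Polynomial ℤ) = X ^ n - C 1 := by rw [map_one]
  have hhdeg : h.natDegree ≤ n := by
    calc h.natDegree = (C (m : ℤ) * h).natDegree := (natDegree_C_mul hm0).symm
      _ = (f - (X ^ n - 1)).natDegree := by rw [hfh]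
      _ ≤ n := le_trans (natDegree_sub_le _ _) (by
            simp [hfdeg, hXn1, natDegree_X_pow_sub_C])
  -- roots of unity are not roots of g
  have hrootu : ∀ z : ℂ, (∃ k : ℕ, 0 < k ∧ z ^ k = 1) → gc.eval z ≠ 0 := by
    rintro z ⟨k, hk, hzk⟩ hz0
    have hfin : IsOfFinOrder z := isOfFinOrder_iff_pow_eq_one.mpr ⟨k, hk, hzk⟩
    have hdpos : 0 < orderOf z := hfin.orderOf_pos
    have hprim : IsPrimitiveRoot z (orderOf z) := IsPrimitiveRoot.orderOf z
    have hzint : IsIntegral ℤ z := ⟨X ^ k - C 1, monic_X_pow_sub_C 1 hk.ne', by simp [hzk]⟩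
    have haev : aeval z g = 0 := by
      rw [aeval_def, show algebraMap ℤ ℂ = ι from Subsingleton.elim _ _, ← eval_map, ← hgc]
      exact hz0
    have hdvd : minpoly ℤ z ∣ g := minpoly.isIntegrallyClosed_dvd hzint haev
    rw [← Polynomial.cyclotomic_eq_minpoly hprim hdpos] at hdvd
    exact hcyc _ hdpos hdvd
  -- for each root of g : α^n - 1 = -(m h(α))
  have hαroot : ∀ α ∈ A, α ^ n - 1 = -((m : ℂ) * (h.map ι).eval α) := by
    intro α hα
    have hge : gc.eval α = 0 := (mem_roots'.mp hα).2
    have hfe : (f.map ι).eval α = 0 := by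
      obtain ⟨w, hw⟩ := hg
      rw [hw, Polynomial.map_mul, eval_mul, ← hgc, hge, zero_mul]
    have hfe2 : (f.map ι).eval α = α ^ n - 1 + (m : ℂ) * (h.map ι).eval α := by
      rw [hf]
      simp only [Polynomial.map_add, Polynomial.map_sub, Polynomial.map_pow,
        Polynomial.map_mul, Polynomial.map_one, Polynomial.map_X, map_C,
        eval_add, eval_sub, eval_pow, eval_mul, eval_X, eval_one, eval_C, eq_intCast, Polynomial.map_intCast, eval_intCast]
      push_cast
      ring
    rw [hfe2] at hfe
    linear_combination hfe
  -- the nth roots of unity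
  set Z := ((X ^ n - C 1 : Polynomial ℤ).map ι).roots with hZ
  have hZmap : (X ^ n - C 1 : Polynomial ℤ).map ι = (X ^ n - C 1 : Polynomial ℂ) := by
    simp
  have hprimn : IsPrimitiveRoot (Complex.exp (2 * Real.pi * Complex.I / n)) n :=
    Complex.isPrimitiveRoot_exp n hn.ne'
  have hZcard : Multiset.card Z = n := by
    rw [hZ, hZmap, show (X ^ n - C 1 : Polynomial ℂ).roots = nthRoots n (1 : ℂ) from rfl]
    exact hprimn.card_nthRoots_one
  have hZpow : ∀ ζ ∈ Z, ζ ^ n = 1 := by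
    intro ζ hζ
    rw [hZ, hZmap] at hζ
    have := (mem_roots'.mp hζ).2
    simp only [IsRoot.def, eval_sub, eval_pow, eval_X, eval_C, sub_eq_zero] at this
    exact this
  have hXnfact : (X ^ n - C 1 : Polynomial ℂ) = (Z.map fun ζ => X - C ζ).prod := by
    have := (IsAlgClosed.splits _).eq_prod_roots_of_monic
      (monic_X_pow_sub_C (1 : ℂ) hn.ne')
    rw [hZ, hZmap]
    exact this
  have hζprod : ∀ w : ℂ, (Z.map fun ζ => w - ζ).prod = w ^ n - 1 := by
    intro w
    have h1 : eval w (X ^ n - C 1 : Polynomial ℂ) = (Z.map fun ζ => w - ζ).prod := by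
      rw [hXnfact, eval_multiset_prod, Multiset.map_map]
      simp [Function.comp]
    simpa using h1.symm
  have hζprod' : ∀ α : ℂ, (Z.map fun ζ => ζ - α).prod = (-1 : ℂ) ^ n * (α ^ n - 1) := by
    intro α
    have h1 : (Z.map fun ζ => ζ - α) = Z.map fun ζ => (-1) * (α - ζ) := by
      congr 1; funext ζ; ring
    rw [h1, Multiset.prod_map_mul, mprod_const, hZcard, hζprod]
  -- factor gc
  have hgclc : gc.leadingCoeff = (a : ℂ) := by
    rw [leadingCoeff, hgcdeg, hgc, coeff_map, hD, coeff_natDegree, ← ha]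
    rfl
  have hgcfact : gc = C (a : ℂ) * (A.map fun α => X - C α).prod := by
    have := (IsAlgClosed.splits gc).eq_prod_roots
    rw [hgclc] at this
    exact this
  have hgceval : ∀ w : ℂ, gc.eval w = (a : ℂ) * (A.map fun α => w - α).prod := by
    intro w
    rw [hgcfact, eval_mul, eval_C, eval_multiset_prod, Multiset.map_map]
    simp [Function.comp]
  -- Identity 1
  have hId1 : (Z.map fun z => gc.eval z).prod
      = (-1 : ℂ) ^ (n * D) * (a : ℂ) ^ n * (A.map fun α => α ^ n - 1).prod := by
    have h1 : (Z.map fun z => gc.eval z)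
        = Z.map fun z => (a : ℂ) * (A.map fun α => z - α).prod := by
      congr 1; funext z; exact hgceval z
    rw [h1, Multiset.prod_map_mul, mprod_const, hZcard, mprod_swap]
    have h2 : (A.map fun b => (Z.map fun z => z - b).prod)
        = A.map fun b => (-1 : ℂ) ^ n * (b ^ n - 1) := by
      congr 1; funext b; exact hζprod' b
    rw [h2, Multiset.prod_map_mul, mprod_const, hAcard, ← pow_mul]
    ring
  obtain ⟨R, hR⟩ := prod_roots_eval_int (X ^ n - C 1) g (monic_X_pow_sub_C (1 : ℤ) hn.ne')
  have hRc : (R : ℂ) = (-1 : ℂ) ^ (n * D) * (a : ℂ) ^ n * (A.map fun α => α ^ n - 1).prod :=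
    hR.symm.trans hId1
  have hR0 : R ≠ 0 := by
    intro h0
    have h1 : (Z.map fun z => gc.eval z).prod = 0 := by rw [hR, h0, Int.cast_zero]
    rw [Multiset.prod_eq_zero_iff] at h1
    obtain ⟨y, hyZ, hy0⟩ := Multiset.mem_map.mp h1
    exact hrootu y ⟨n, hn, hZpow y hyZ⟩ hy0
  -- case D = 0
  by_cases hD0 : D = 0
  · obtain ⟨c, hc⟩ := natDegree_eq_zero.mp (hD.symm.trans hD0)
    have hc0 : c ≠ 0 := by
      rintro rfl
      exact hg0 (by rw [← hc]; simp)
    have hmm0 : mahlerMeasure g = Real.log |(c : ℝ)| := by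
      unfold _root_.mahlerMeasure
      rw [← hc, leadingCoeff_C, map_C, roots_C]
      simp
    rw [hmm0, hD0]
    simp only [Nat.cast_zero, mul_zero, zero_div]
    exact Real.log_nonneg (by exact_mod_cast Int.one_le_abs hc0)
  obtain ⟨d, hDd⟩ := Nat.exists_eq_succ_of_ne_zero hD0
  -- the monicization G of g
  set G : Polynomial ℤ := X ^ D + ∑ i ∈ Finset.range D, C (g.coeff i * a ^ (D - 1 - i)) * X ^ i
    with hG
  have hGmonic : G.Monic := by
    apply monic_X_pow_add
    refine lt_of_le_of_lt (degree_sum_le _ _) ?_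
    rw [Finset.sup_lt_iff (by exact_mod_cast WithBot.bot_lt_coe D)]
    intro i hi
    exact lt_of_le_of_lt (degree_C_mul_X_pow_le _ _)
      (by exact_mod_cast Finset.mem_range.mp hi)
  have hgevalsum : ∀ z : ℂ, gc.eval z = ∑ i ∈ Finset.range (D + 1), (g.coeff i : ℂ) * z ^ i := by
    intro z
    rw [hgc, eval_map, eval₂_eq_sum_range' ι (by omega : g.natDegree < D + 1) z]
    simp [eq_intCast]
  have hcD : g.coeff D = a := coeff_natDegree
  have hGeval : ∀ z : ℂ, (G.map ι).eval ((a : ℂ) * z) = (a : ℂ) ^ d * gc.eval z := by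
    intro z
    have hL : (G.map ι).eval ((a : ℂ) * z)
        = ((a : ℂ) * z) ^ D + ∑ i ∈ Finset.range D,
            (g.coeff i : ℂ) * (a : ℂ) ^ (D - 1 - i) * ((a : ℂ) * z) ^ i := by
      rw [hG]
      simp only [Polynomial.map_add, Polynomial.map_pow, Polynomial.map_X, Polynomial.map_sum,
        Polynomial.map_mul, map_C, eval_add, eval_pow, eval_X, eval_finset_sum, eval_mul,
        eval_C, eq_intCast, Polynomial.map_intCast, Polynomial.map_pow, eval_intCast]
      push_cast
      ring
    have hsum : ∑ i ∈ Finset.range D, (g.coeff i : ℂ) * (a : ℂ) ^ (D - 1 - i) * ((a : ℂ) * z) ^ i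
        = (a : ℂ) ^ d * ∑ i ∈ Finset.range D, (g.coeff i : ℂ) * z ^ i := by
      rw [Finset.mul_sum]
      apply Finset.sum_congr rfl
      intro i hi
      have hie : (D - 1 - i) + i = d := by
        have := Finset.mem_range.mp hi; omega
      rw [mul_pow, ← hie, pow_add]
      ring
    have htop : ((a : ℂ) * z) ^ D = (a : ℂ) ^ d * ((g.coeff D : ℂ) * z ^ D) := by
      rw [hcD, hDd, pow_succ, pow_succ]
      ring
    rw [hL, hgevalsum z, Finset.sum_range_succ, mul_add, ← hsum, ← htop]
    ring
  -- roots of G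
  have hGfact : G.map ι = (A.map fun α => X - C ((a : ℂ) * α)).prod := by
    apply Polynomial.funext
    intro z
    have hz : (a : ℂ) * (z / a) = z := by field_simp
    have h1 : (G.map ι).eval z = (a : ℂ) ^ D * (A.map fun α => z / a - α).prod := by
      conv_lhs => rw [← hz]
      rw [hGeval (z / a), hgceval (z / a), hDd, pow_succ]
      ring
    have h2 : eval z (A.map fun α => X - C ((a : ℂ) * α)).prod
        = (A.map fun α => z - (a : ℂ) * α).prod := by
      rw [eval_multiset_prod, Multiset.map_map]
      simp [Function.comp]
    have h3 : (A.map fun α => z - (a : ℂ) * α) = A.map fun α => (a : ℂ) * (z / a - α) := by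
      refine Multiset.map_congr rfl ?_
      intro α _
      field_simp
    rw [h1, h2, h3, Multiset.prod_map_mul, mprod_const, hAcard]
  have hGroots : (G.map ι).roots = A.map fun α => (a : ℂ) * α := by
    rw [hGfact,
      show (A.map fun α => X - C ((a : ℂ) * α)) = (A.map fun α => (a : ℂ) * α).map
        (fun r => X - C r) by rw [Multiset.map_map]; rfl,
      roots_multiset_prod_X_sub_C]
  -- the polynomial H
  set H : Polynomial ℤ := ∑ j ∈ Finset.range (n + 1), C (h.coeff j * a ^ (n - j)) * X ^ j
    with hHdef
  have hHeval : ∀ w : ℂ, (H.map ι).eval ((a : ℂ) * w) = (a : ℂ) ^ n * (h.map ι).eval w := by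
    intro w
    have hL : (H.map ι).eval ((a : ℂ) * w)
        = ∑ j ∈ Finset.range (n + 1),
            (h.coeff j : ℂ) * (a : ℂ) ^ (n - j) * ((a : ℂ) * w) ^ j := by
      rw [hHdef]
      simp only [Polynomial.map_sum, Polynomial.map_mul, Polynomial.map_pow, Polynomial.map_X,
        map_C, eval_finset_sum, eval_mul, eval_pow, eval_X, eval_C, eq_intCast,
        Polynomial.map_intCast, eval_intCast]
      push_cast
      ring
    have hRr : (h.map ι).eval w = ∑ j ∈ Finset.range (n + 1), (h.coeff j : ℂ) * w ^ j := by
      rw [eval_map, eval₂_eq_sum_range' ι (Nat.lt_succ_of_le hhdeg) w]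
      simp [eq_intCast]
    rw [hL, hRr, Finset.mul_sum]
    apply Finset.sum_congr rfl
    intro jj hjj
    have hje : (n - jj) + jj = n := by
      have := Finset.mem_range.mp hjj; omega
    rw [mul_pow, show ((h.coeff jj : ℂ)) * (a : ℂ) ^ (n - jj) * ((a : ℂ) ^ jj * w ^ jj)
      = ((a : ℂ) ^ (n - jj) * (a : ℂ) ^ jj) * ((h.coeff jj : ℂ) * w ^ jj) from by ring,
      ← pow_add, hje]
  obtain ⟨B, hB⟩ := prod_roots_eval_int G H hGmonic
  have hBc : (B : ℂ) = (a : ℂ) ^ (n * D) * (A.map fun α => (h.map ι).eval α).prod := by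
    rw [← hB, hGroots, Multiset.map_map]
    have h1 : ((fun x => (H.map ι).eval x) ∘ fun α => (a : ℂ) * α)
        = fun α => (a : ℂ) ^ n * (h.map ι).eval α := by
      funext α; exact hHeval α
    rw [h1, Multiset.prod_map_mul, mprod_const, hAcard, ← pow_mul]
  -- the key integer identity
  have hprodα : (A.map fun α => α ^ n - 1).prod
      = (-1 : ℂ) ^ D * (m : ℂ) ^ D * (A.map fun α => (h.map ι).eval α).prod := by
    have h1 : (A.map fun α => α ^ n - 1) = A.map fun α => (-(m : ℂ)) * (h.map ι).eval α := by
      refine Multiset.map_congr rfl ?_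
      intro α hα
      rw [hαroot α hα]; ring
    rw [h1, Multiset.prod_map_mul, mprod_const, hAcard, neg_pow]
  have hkeyC : (a : ℂ) ^ (n * d) * (R : ℂ)
      = (-1 : ℂ) ^ (n * D + D) * (m : ℂ) ^ D * (B : ℂ) := by
    rw [hRc, hprodα, hBc]
    have hpow : (a : ℂ) ^ (n * d) * (a : ℂ) ^ n = (a : ℂ) ^ (n * D) := by
      rw [← pow_add, hDd, Nat.mul_succ]
    rw [pow_add ((-1 : ℂ)) (n * D) D]
    linear_combination ((-1 : ℂ) ^ (n * D) * (-1 : ℂ) ^ D * (m : ℂ) ^ D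
      * (A.map fun α => (h.map ι).eval α).prod) * hpow
  have hkeyZ : a ^ (n * d) * R = (-1 : ℤ) ^ (n * D + D) * (m : ℤ) ^ D * B := by
    exact_mod_cast hkeyC
  have hdvd : ((m : ℤ)) ^ D ∣ a ^ (n * d) * R :=
    ⟨(-1 : ℤ) ^ (n * D + D) * B, by rw [hkeyZ]; ring⟩
  -- coprimality of m and a
  have hfc : f.coeff n = 1 + (m : ℤ) * h.coeff n := by
    rw [hf]
    simp [coeff_add, coeff_sub, coeff_X_pow, coeff_one, coeff_C_mul, hn.ne']
  have hadvd : a ∣ f.coeff n := by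
    obtain ⟨w, hw⟩ := hg
    have h1 : f.leadingCoeff = a * w.leadingCoeff := by rw [hw, leadingCoeff_mul, ha]
    rw [show f.coeff n = f.leadingCoeff by rw [← hfdeg]; exact coeff_natDegree, h1]
    exact ⟨w.leadingCoeff, rfl⟩
  have hcop : IsCoprime ((m : ℤ)) a := by
    have h1 : IsCoprime ((m : ℤ)) (f.coeff n) := ⟨-h.coeff n, 1, by rw [hfc]; ring⟩
    obtain ⟨w', hw'⟩ := hadvd
    rw [hw'] at h1
    exact h1.of_mul_right_left
  have hdvdR : ((m : ℤ)) ^ D ∣ R := (hcop.pow).dvd_of_dvd_mul_left hdvd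
  have hlow : ((m : ℤ)) ^ D ≤ |R| := Int.le_of_dvd (abs_pos.mpr hR0) ((dvd_abs _ _).mpr hdvdR)
  -- upper bound for |R|
  set Ma : ℝ := |(a : ℝ)| with hMa
  set Mp : ℝ := (A.map fun α => max 1 ‖α‖).prod with hMp
  have hMa1 : (1 : ℝ) ≤ Ma := by
    rw [hMa]
    exact_mod_cast Int.one_le_abs ha0
  have hMp1 : (1 : ℝ) ≤ Mp := by
    refine Multiset.one_le_prod ?_
    intro x hx
    obtain ⟨α, _, rfl⟩ := Multiset.mem_map.mp hx
    exact le_max_left _ _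
  have hMa0 : (0 : ℝ) < Ma := lt_of_lt_of_le one_pos hMa1
  have hMp0 : (0 : ℝ) < Mp := lt_of_lt_of_le one_pos hMp1
  have habsR : ‖(R : ℂ)‖
      = Ma ^ n * (A.map fun α => ‖α ^ n - 1‖).prod := by
    rw [hRc, norm_mul, norm_mul, norm_pow, norm_pow]
    rw [show ‖(-1 : ℂ)‖ = 1 by simp, one_pow, one_mul]
    rw [show ‖((a : ℤ) : ℂ)‖ = Ma by rw [Complex.norm_intCast, hMa]]
    congr 1
    rw [show ‖(A.map fun α => α ^ n - 1).prod‖ = (normHom : ℂ →*₀ ℝ) (A.map fun α => α ^ n - 1).prod from rfl,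
      map_multiset_prod, Multiset.map_map]
    rfl
  have hub : ‖(R : ℂ)‖ ≤ 2 ^ D * (Ma * Mp) ^ n := by
    have hptwise : ∀ α ∈ A, ‖α ^ n - 1‖ ≤ 2 * max 1 ‖α‖ ^ n := by
      intro α _
      have h1 : ‖α ^ n - 1‖ ≤ ‖α‖ ^ n + 1 := by
        have h2 := norm_add_le (α ^ n) (-1)
        simpa [sub_eq_add_neg, norm_pow] using h2
      have h2 : ‖α‖ ^ n ≤ max 1 ‖α‖ ^ n :=
        pow_le_pow_left₀ (norm_nonneg α) (le_max_right _ _) n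
      have h3 : (1 : ℝ) ≤ max 1 ‖α‖ ^ n := by
        have h4 := pow_le_pow_left₀ (by norm_num : (0:ℝ) ≤ 1) (le_max_left 1 ‖α‖) n
        simpa using h4
      linarith
    calc ‖(R : ℂ)‖ = Ma ^ n * (A.map fun α => ‖α ^ n - 1‖).prod := habsR
      _ ≤ Ma ^ n * (A.map fun α => 2 * max 1 ‖α‖ ^ n).prod := by
          refine mul_le_mul_of_nonneg_left ?_ (pow_nonneg (le_trans zero_le_one hMa1) n)
          exact Multiset.prod_map_le_prod_map₀ _ _ (fun α _ => norm_nonneg _) hptwise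
      _ = 2 ^ D * (Ma * Mp) ^ n := by
          rw [Multiset.prod_map_mul, mprod_const, hAcard, Multiset.prod_map_pow, mul_pow]
          rw [hMp]
          ring
  have hmR : ((m : ℝ)) ^ D ≤ 2 ^ D * (Ma * Mp) ^ n := by
    have h1 : ((m : ℝ)) ^ D ≤ ‖(R : ℂ)‖ := by
      rw [Complex.norm_intCast]
      have h2 : (((m : ℤ) ^ D : ℤ) : ℝ) ≤ ((|R| : ℤ) : ℝ) := by exact_mod_cast hlow
      push_cast at h2
      convert h2 using 2
    exact h1.trans hub
  -- conclude with logarithms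
  have hmah : mahlerMeasure g = Real.log (Ma * Mp) := by
    rw [Real.log_mul hMa0.ne' hMp0.ne']
    unfold _root_.mahlerMeasure
    congr 1
    rw [hMp, ← msum_log (by
      intro x hx
      obtain ⟨α, _, rfl⟩ := Multiset.mem_map.mp hx
      exact lt_of_lt_of_le one_pos (le_max_left _ _))]
    rw [Multiset.map_map]
    rfl
  have hm2 : (2 : ℝ) ≤ (m : ℝ) := by exact_mod_cast hm
  have hmpos : (0 : ℝ) < (m : ℝ) := by linarith
  have hlogs : (D : ℝ) * Real.log m ≤ D * Real.log 2 + n * Real.log (Ma * Mp) := by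
    have h2 : Real.log ((m : ℝ) ^ D) ≤ Real.log (2 ^ D * (Ma * Mp) ^ n) :=
      (Real.log_le_log_iff (pow_pos hmpos D)
        (mul_pos (pow_pos two_pos D) (pow_pos (mul_pos hMa0 hMp0) n))).mpr hmR
    rw [Real.log_pow, Real.log_mul (by positivity) (by positivity), Real.log_pow,
      Real.log_pow] at h2
    exact_mod_cast h2
  rw [ge_iff_le, div_le_iff₀ (by exact_mod_cast hn : (0 : ℝ) < (n : ℝ))]
  rw [Real.log_div hmpos.ne' two_ne_zero, hmah]
  linarith [hlogs]
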